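/- In any stable matching M of the extended instance I'_{3,3}(B), every hospital in L ∪ Y is matched and every resident in K ∪ X is matched, where X = {x_{4i+r}}, K = {k_{4i+r}}, Y = {y_{4i+r}} and L = {l_{4i+r}} for 0≤i≤n−1 and 0≤r≤3. -/

import Mathlib

/-- A one-to-one HRC instance: residents are partitioned into single residents and
ordered couples; all hospitals have capacity 1. -/
structure HRC1 (R H : Type) where
  singles : List R
  couples : List (R × R)
  singlePref : R → List H
  couplePref : R × R → List (H × H)
  hospPref : H → List R

namespace HRC1

/-- `x` precedes `y` on the strict preference list `l`. -/
def Prefers {α : Type} [DecidableEq α] (l : List α) (x y : α) : Prop :=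
  x ∈ l ∧ y ∈ l ∧ l.idxOf x < l.idxOf y

variable {R H : Type} [DecidableEq R] [DecidableEq H]

/-- `M` is a matching of the instance `I`. -/
def IsMatching (I : HRC1 R H) (M : R → Option H) : Prop :=
  (∀ r₁ r₂ h, M r₁ = some h → M r₂ = some h → r₁ = r₂) ∧
  (∀ r ∈ I.singles, ∀ h, M r = some h → h ∈ I.singlePref r) ∧
  (∀ c ∈ I.couples,
    (M c.1 = none ∧ M c.2 = none) ∨
    ∃ hp ∈ I.couplePref c, M c.1 = some hp.1 ∧ M c.2 = some hp.2) ∧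
  (∀ r, (M r).isSome → r ∈ I.singles ∨ ∃ c ∈ I.couples, r = c.1 ∨ r = c.2)

/-- Hospital `h` is unmatched in `M`. -/
def HospFree (M : R → Option H) (h : H) : Prop := ∀ r, M r ≠ some h

/-- Hospital `h` is unmatched in `M`, or prefers `r` to its current assignee. -/
def HospOpenFor (I : HRC1 R H) (M : R → Option H) (h : H) (r : R) : Prop :=
  HospFree M h ∨ ∃ r', M r' = some h ∧ Prefers (I.hospPref h) r r'

/-- Blocking pair consisting of a single resident `r` and a hospital `h`. -/
def BlockSingle (I : HRC1 R H) (M : R → Option H) (r : R) (h : H) : Prop :=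
  r ∈ I.singles ∧ h ∈ I.singlePref r ∧
  (M r = none ∨ ∃ h', M r = some h' ∧ Prefers (I.singlePref r) h h') ∧
  I.HospOpenFor M h r

/-- Blocking pair consisting of a couple `c` and a pair of hospitals `hp` on its joint list. -/
def BlockCouple (I : HRC1 R H) (M : R → Option H) (c : R × R) (hp : H × H) : Prop :=
  c ∈ I.couples ∧ hp ∈ I.couplePref c ∧
  ((M c.1 = none ∧ M c.2 = none) ∨
    ∃ hp' ∈ I.couplePref c, M c.1 = some hp'.1 ∧ M c.2 = some hp'.2 ∧
      Prefers (I.couplePref c) hp hp') ∧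
  (M c.1 = some hp.1 ∨ I.HospOpenFor M hp.1 c.1) ∧
  (M c.2 = some hp.2 ∨ I.HospOpenFor M hp.2 c.2)

/-- `M` is a stable matching of the instance `I`. -/
def Stable (I : HRC1 R H) (M : R → Option H) : Prop :=
  I.IsMatching M ∧ (∀ r h, ¬ I.BlockSingle M r h) ∧ (∀ c hp, ¬ I.BlockCouple M c hp)

end HRC1

/-- An instance of (2,2)-E3-SAT: `m` clauses, each with exactly 3 literals over `n`
variables (a literal is a variable together with a polarity, `true` for positive);
`occ l` enumerates the two occurrences of the literal `l`, so that each of the literals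
`vᵢ` and `¬vᵢ` appears exactly twice. -/
structure E3SAT (n m : ℕ) where
  clause : Fin m → Fin 3 → Fin n × Bool
  occ : Fin n × Bool → Fin 2 → Fin m × Fin 3
  occ_spec : ∀ l r, clause (occ l r).1 (occ l r).2 = l
  occ_inj : ∀ l, occ l 0 ≠ occ l 1
  occ_surj : ∀ j s, ∃ r, occ (clause j s) r = (j, s)

namespace E3SAT

variable {n m : ℕ}

/-- `B` is satisfiable. -/
def Satisfiable (B : E3SAT n m) : Prop :=
  ∃ f : Fin n → Bool, ∀ j : Fin m, ∃ s : Fin 3, f (B.clause j s).1 = (B.clause j s).2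

/-- The index (`0` or `1`) of the occurrence of its literal that position `s` of
clause `j` constitutes. -/
def rIdx (B : E3SAT n m) (j : Fin m) (s : Fin 3) : Fin 2 :=
  if B.occ (B.clause j s) 0 = (j, s) then 0 else 1

end E3SAT

/-- Residents of the extended instance `I′₃₃(B)`: `X i r = x_{4i+r}`, `K i r = k_{4i+r}`,
`P j s = p_j^{s+1}`, `Q j = q_{j+1}`, `T j = t_{j+1}`, `U i r s = u^{s+1}_{4i+r}`
(0-based indices). -/
inductive Res3E (n m : ℕ)
  | X (i : Fin n) (r : Fin 4)
  | K (i : Fin n) (r : Fin 4)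
  | P (j : Fin m) (s : Fin 6)
  | Q (j : Fin m)
  | T (j : Fin m)
  | U (i : Fin n) (r : Fin 4) (s : Fin 5)
deriving DecidableEq

/-- Hospitals of the extended instance `I′₃₃(B)`: `Y i r = y_{4i+r}`, `L i r = l_{4i+r}`,
`C j s = c_j^{s+1}`, `Z j r = z_j^{r+1}`, `Hh i r s = h^{s+1}_{4i+r}` (0-based indices). -/
inductive Hos3E (n m : ℕ)
  | Y (i : Fin n) (r : Fin 4)
  | L (i : Fin n) (r : Fin 4)
  | C (j : Fin m) (s : Fin 3)
  | Z (j : Fin m) (r : Fin 5)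
  | Hh (i : Fin n) (r : Fin 4) (s : Fin 4)
deriving DecidableEq

variable {n m : ℕ}

/-- The hospital `c(x_{4i+r})`: for `r ∈ {0,1}` the clause hospital of the `(r+1)`-th
occurrence of `vᵢ`; for `r ∈ {2,3}` that of the `(r−1)`-th occurrence of `¬vᵢ`. -/
def cX (B : E3SAT n m) (i : Fin n) (r : Fin 4) : Hos3E n m :=
  have hr := r.isLt
  let o := B.occ (i, decide (r.val < 2)) ⟨r.val % 2, by omega⟩
  Hos3E.C o.1 o.2

/-- The resident `x(c_j^{s+1})` corresponding to the literal at position `s` of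
clause `c_j`. -/
def xOfC (B : E3SAT n m) (j : Fin m) (s : Fin 3) : Res3E n m :=
  let l := B.clause j s
  have hv : (B.rIdx j s).val < 2 := (B.rIdx j s).isLt
  if l.2 then Res3E.X l.1 ⟨(B.rIdx j s).val, by omega⟩
  else Res3E.X l.1 ⟨(B.rIdx j s).val + 2, by omega⟩

/-- The extended one-to-one HRC instance `I′₃₃(B)` constructed from the
(2,2)-E3-SAT instance `B`. -/
def instI33E (B : E3SAT n m) : HRC1 (Res3E n m) (Hos3E n m) where
  singles :=
    ((List.finRange m).map fun j => Res3E.Q j) ++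
    ((List.finRange m).map fun j => Res3E.T j) ++
    ((List.finRange n).flatMap fun i =>
      (List.finRange 4).map fun r => Res3E.U i r 4)
  couples :=
    ((List.finRange n).flatMap fun i =>
      (List.finRange 4).map fun r => (Res3E.X i r, Res3E.K i r)) ++
    ((List.finRange m).flatMap fun j =>
      (List.finRange 3).map fun s =>
        (Res3E.P j ⟨s.val, by have := s.isLt; omega⟩,
         Res3E.P j ⟨s.val + 3, by have := s.isLt; omega⟩)) ++
    ((List.finRange n).flatMap fun i =>
      (List.finRange 4).flatMap fun r =>
        [(Res3E.U i r 0, Res3E.U i r 1), (Res3E.U i r 2, Res3E.U i r 3)])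
  singlePref := fun r => match r with
    | Res3E.Q j => [Hos3E.C j 0, Hos3E.C j 1, Hos3E.C j 2]
    | Res3E.T j => [Hos3E.Z j 2, Hos3E.Z j 3, Hos3E.Z j 4]
    | Res3E.U i r s => if s = 4 then [Hos3E.Y i r, Hos3E.Hh i r 0] else []
    | _ => []
  couplePref := fun c => match c with
    | (Res3E.X i r, Res3E.K i' r') =>
        if i' = i ∧ r' = r then
          if r = 0 then
            [(Hos3E.Y i 0, Hos3E.L i 0), (cX B i 0, Hos3E.L i 1),
             (Hos3E.Y i 1, Hos3E.L i 1)]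
          else if r = 1 then
            [(Hos3E.Y i 1, Hos3E.L i 1), (cX B i 1, Hos3E.L i 2),
             (Hos3E.Y i 2, Hos3E.L i 2)]
          else if r = 2 then
            [(Hos3E.Y i 3, Hos3E.L i 3), (cX B i 2, Hos3E.L i 2),
             (Hos3E.Y i 2, Hos3E.L i 2)]
          else
            [(Hos3E.Y i 0, Hos3E.L i 0), (cX B i 3, Hos3E.L i 3),
             (Hos3E.Y i 3, Hos3E.L i 3)]
        else []
    | (Res3E.P j s, Res3E.P j' s') =>
        if hc : j' = j ∧ s.val < 3 ∧ s'.val = s.val + 3 then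
          [(Hos3E.Z j 0, Hos3E.Z j 1),
           (Hos3E.C j ⟨s.val, hc.2.1⟩, Hos3E.Z j ⟨s.val + 2, by have := hc.2.1; omega⟩)]
        else []
    | (Res3E.U i r s, Res3E.U i' r' s') =>
        if i' = i ∧ r' = r then
          if s = 0 ∧ s' = 1 then [(Hos3E.Hh i r 0, Hos3E.Hh i r 1)]
          else if s = 2 ∧ s' = 3 then
            [(Hos3E.Hh i r 0, Hos3E.Hh i r 3), (Hos3E.Hh i r 2, Hos3E.Hh i r 1)]
          else []
        else []
    | _ => []
  hospPref := fun hh => match hh with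
    | Hos3E.Y i r =>
        (if r = 0 then [Res3E.X i 0, Res3E.X i 3]
         else if r = 1 then [Res3E.X i 1, Res3E.X i 0]
         else if r = 2 then [Res3E.X i 1, Res3E.X i 2]
         else [Res3E.X i 2, Res3E.X i 3]) ++ [Res3E.U i r 4]
    | Hos3E.L i r =>
        if r = 0 then [Res3E.K i 3, Res3E.K i 0]
        else if r = 1 then [Res3E.K i 0, Res3E.K i 1]
        else if r = 2 then [Res3E.K i 2, Res3E.K i 1]
        else [Res3E.K i 3, Res3E.K i 2]
    | Hos3E.C j s =>
        [Res3E.P j ⟨s.val, by have := s.isLt; omega⟩, xOfC B j s, Res3E.Q j]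
    | Hos3E.Z j r =>
        if r = 0 then [Res3E.P j 0, Res3E.P j 1, Res3E.P j 2]
        else if r = 1 then [Res3E.P j 5, Res3E.P j 4, Res3E.P j 3]
        else if r = 2 then [Res3E.P j 3, Res3E.T j]
        else if r = 3 then [Res3E.P j 4, Res3E.T j]
        else [Res3E.P j 5, Res3E.T j]
    | Hos3E.Hh i r s =>
        if s = 0 then [Res3E.U i r 4, Res3E.U i r 0, Res3E.U i r 2]
        else if s = 1 then [Res3E.U i r 3, Res3E.U i r 1]
        else if s = 2 then [Res3E.U i r 2]
        else [Res3E.U i r 3]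

section ProofAux
variable {n m : ℕ} {B : E3SAT n m} {M : Res3E n m → Option (Hos3E n m)}

open Res3E Hos3E

lemma matched_cases (hM : (instI33E B).IsMatching M) {res : Res3E n m} {h : Hos3E n m}
    (hres : M res = some h) :
    (res ∈ (instI33E B).singles ∧ h ∈ (instI33E B).singlePref res) ∨
    ∃ c ∈ (instI33E B).couples, ∃ hp ∈ (instI33E B).couplePref c,
      (res = c.1 ∧ h = hp.1 ∧ M c.2 = some hp.2) ∨
      (res = c.2 ∧ h = hp.2 ∧ M c.1 = some hp.1) := by
  obtain ⟨hinj, hsing, hcpl, hdom⟩ := hM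
  rcases hdom res (by simp [hres]) with hs | ⟨c, hc, hc12⟩
  · exact Or.inl ⟨hs, hsing res hs h hres⟩
  · rcases hcpl c hc with ⟨h1, h2⟩ | ⟨hp, hhp, h1, h2⟩
    · exfalso; rcases hc12 with rfl | rfl <;> simp_all
    · refine Or.inr ⟨c, hc, hp, hhp, ?_⟩
      rcases hc12 with rfl | rfl
      · exact Or.inl ⟨rfl, Option.some.inj (hres.symm.trans h1), h2⟩
      · exact Or.inr ⟨rfl, Option.some.inj (hres.symm.trans h2), h1⟩

lemma couples_mem {c : Res3E n m × Res3E n m} (hc : c ∈ (instI33E B).couples) :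
    (∃ i a, c = (Res3E.X i a, Res3E.K i a)) ∨
    (∃ (j : Fin m) (s : Fin 3), c = (Res3E.P j ⟨s.1, by have := s.isLt; omega⟩,
        Res3E.P j ⟨s.1 + 3, by have := s.isLt; omega⟩)) ∨
    (∃ i r, c = (Res3E.U i r 0, Res3E.U i r 1) ∨ c = (Res3E.U i r 2, Res3E.U i r 3)) := by
  simp only [instI33E, List.mem_append, List.mem_flatMap, List.mem_map,
    List.mem_finRange, List.mem_cons, List.not_mem_nil, or_false, true_and] at hc
  rcases hc with (⟨i, a, h⟩ | ⟨j, s, h⟩) | ⟨i, r, h⟩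
  · exact Or.inl ⟨i, a, h.symm⟩
  · exact Or.inr (Or.inl ⟨j, s, h.symm⟩)
  · exact Or.inr (Or.inr ⟨i, r, h⟩)

lemma singles_mem {res : Res3E n m} (hs : res ∈ (instI33E B).singles) :
    (∃ j, res = Res3E.Q j) ∨ (∃ j, res = Res3E.T j) ∨ (∃ i r, res = Res3E.U i r 4) := by
  simp only [instI33E, List.mem_append, List.mem_flatMap, List.mem_map,
    List.mem_finRange, true_and] at hs
  rcases hs with (⟨j, h⟩ | ⟨j, h⟩) | ⟨i, r, h⟩
  · exact Or.inl ⟨j, h.symm⟩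
  · exact Or.inr (Or.inl ⟨j, h.symm⟩)
  · exact Or.inr (Or.inr ⟨i, r, h.symm⟩)

end ProofAux
section ProofAux2
variable {n m : ℕ} {B : E3SAT n m} {M : Res3E n m → Option (Hos3E n m)}

open Res3E Hos3E

lemma inv_Y (hM : (instI33E B).IsMatching M) {res : Res3E n m} {i : Fin n} {r : Fin 4}
    (hres : M res = some (Hos3E.Y i r)) :
    res = Res3E.U i r 4 ∨
    ∃ a : Fin 4, res = Res3E.X i a ∧ M (Res3E.K i a) = some (Hos3E.L i r) := by
  rcases matched_cases hM hres with ⟨hs, hp⟩ | ⟨c, hc, hp, hhp, hcase⟩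
  · rcases singles_mem hs with ⟨j, rfl⟩ | ⟨j, rfl⟩ | ⟨i', r', rfl⟩
    · simp [instI33E] at hp
    · simp [instI33E] at hp
    · simp [instI33E] at hp
      obtain ⟨rfl, rfl⟩ := hp
      exact Or.inl rfl
  · rcases couples_mem hc with ⟨i', a, rfl⟩ | ⟨j, s, rfl⟩ | ⟨i', r', rfl | rfl⟩
    · fin_cases a <;> simp [instI33E, cX] at hhp <;>
        rcases hhp with rfl | rfl | rfl <;>
        rcases hcase with ⟨rfl, heq, hmm⟩ | ⟨rfl, heq, hmm⟩ <;>
        simp at heq <;>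
        (obtain ⟨rfl, rfl⟩ := heq; exact Or.inr ⟨_, rfl, hmm⟩)
    · simp [instI33E] at hhp
      rcases hhp with rfl | rfl <;>
        rcases hcase with ⟨rfl, heq, hmm⟩ | ⟨rfl, heq, hmm⟩ <;> exact absurd heq (by simp)
    · simp [instI33E] at hhp
      rcases hhp with rfl <;>
        rcases hcase with ⟨rfl, heq, hmm⟩ | ⟨rfl, heq, hmm⟩ <;> exact absurd heq (by simp)
    · simp [instI33E] at hhp
      rcases hhp with rfl | rfl <;>
        rcases hcase with ⟨rfl, heq, hmm⟩ | ⟨rfl, heq, hmm⟩ <;> exact absurd heq (by simp)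

end ProofAux2
section ProofAux3
variable {n m : ℕ} {B : E3SAT n m} {M : Res3E n m → Option (Hos3E n m)}

open Res3E Hos3E

lemma inv_Hh (hM : (instI33E B).IsMatching M) {res : Res3E n m} {i : Fin n} {r : Fin 4}
    {s : Fin 4} (hres : M res = some (Hos3E.Hh i r s)) :
    ∃ t : Fin 5, res = Res3E.U i r t := by
  rcases matched_cases hM hres with ⟨hs, hp⟩ | ⟨c, hc, hp, hhp, hcase⟩
  · rcases singles_mem hs with ⟨j, rfl⟩ | ⟨j, rfl⟩ | ⟨i', r', rfl⟩
    · simp [instI33E] at hp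
    · simp [instI33E] at hp
    · simp [instI33E] at hp
      obtain ⟨rfl, rfl, -⟩ := hp
      exact ⟨4, rfl⟩
  · rcases couples_mem hc with ⟨i', a, rfl⟩ | ⟨j, s', rfl⟩ | ⟨i', r', rfl | rfl⟩
    · fin_cases a <;> simp [instI33E, cX] at hhp <;>
        rcases hhp with rfl | rfl | rfl <;>
        rcases hcase with ⟨rfl, heq, hmm⟩ | ⟨rfl, heq, hmm⟩ <;>
        simp at heq
    · simp [instI33E] at hhp
      rcases hhp with rfl | rfl <;>
        rcases hcase with ⟨rfl, heq, hmm⟩ | ⟨rfl, heq, hmm⟩ <;> simp at heq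
    · simp [instI33E] at hhp
      subst hhp
      rcases hcase with ⟨rfl, heq, hmm⟩ | ⟨rfl, heq, hmm⟩ <;>
        · simp at heq; obtain ⟨rfl, rfl, -⟩ := heq; exact ⟨_, rfl⟩
    · simp [instI33E] at hhp
      rcases hhp with rfl | rfl <;>
        rcases hcase with ⟨rfl, heq, hmm⟩ | ⟨rfl, heq, hmm⟩ <;>
        · simp at heq; obtain ⟨rfl, rfl, -⟩ := heq; exact ⟨_, rfl⟩

end ProofAux3
section ProofAux4
variable {n m : ℕ} {B : E3SAT n m} {M : Res3E n m → Option (Hos3E n m)}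

open Res3E Hos3E

lemma prefers_one {α : Type} [DecidableEq α] {a b : α} (l : List α) (h : b ≠ a) :
    HRC1.Prefers (a :: b :: l) a b := by
  refine ⟨by simp, by simp, ?_⟩
  rw [List.idxOf_cons_self, List.idxOf_cons_ne _ h.symm]
  omega

lemma prefers_two {α : Type} [DecidableEq α] {a b c : α} (l : List α)
    (h1 : c ≠ a) (h2 : c ≠ b) : HRC1.Prefers (a :: b :: c :: l) a c := by
  refine ⟨by simp, by simp, ?_⟩
  rw [List.idxOf_cons_self, List.idxOf_cons_ne _ h1.symm,
    List.idxOf_cons_ne _ h2.symm]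
  omega

lemma prefers_mid {α : Type} [DecidableEq α] {a b c : α} (l : List α)
    (h0 : b ≠ a) (h1 : c ≠ a) (h2 : c ≠ b) : HRC1.Prefers (a :: b :: c :: l) b c := by
  refine ⟨by simp, by simp, ?_⟩
  rw [List.idxOf_cons_ne _ h0.symm, List.idxOf_cons_self,
    List.idxOf_cons_ne _ h1.symm, List.idxOf_cons_ne _ h2.symm]
  omega

lemma mem_cU01 {i : Fin n} {r : Fin 4} :
    (Res3E.U i r 0, Res3E.U i r 1) ∈ (instI33E B).couples := by
  simp only [instI33E, List.mem_append, List.mem_flatMap, List.mem_map,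
    List.mem_finRange, List.mem_cons, true_and]
  exact Or.inr ⟨i, r, Or.inl rfl⟩

lemma mem_cU23 {i : Fin n} {r : Fin 4} :
    (Res3E.U i r 2, Res3E.U i r 3) ∈ (instI33E B).couples := by
  simp only [instI33E, List.mem_append, List.mem_flatMap, List.mem_map,
    List.mem_finRange, List.mem_cons, true_and]
  exact Or.inr ⟨i, r, Or.inr (Or.inl rfl)⟩

lemma mem_sU4 {i : Fin n} {r : Fin 4} :
    (Res3E.U i r 4) ∈ (instI33E B).singles := by
  simp only [instI33E, List.mem_append, List.mem_flatMap, List.mem_map,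
    List.mem_finRange, true_and]
  exact Or.inr ⟨i, r, rfl⟩

lemma state01 (hM : (instI33E B).IsMatching M) (i : Fin n) (r : Fin 4) :
    (M (Res3E.U i r 0) = none ∧ M (Res3E.U i r 1) = none) ∨
    (M (Res3E.U i r 0) = some (Hos3E.Hh i r 0) ∧
     M (Res3E.U i r 1) = some (Hos3E.Hh i r 1)) := by
  have h := hM.2.2.1 _ (mem_cU01 (i := i) (r := r) (B := B))
  simpa [instI33E] using h

lemma state23 (hM : (instI33E B).IsMatching M) (i : Fin n) (r : Fin 4) :
    (M (Res3E.U i r 2) = none ∧ M (Res3E.U i r 3) = none) ∨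
    (M (Res3E.U i r 2) = some (Hos3E.Hh i r 0) ∧
     M (Res3E.U i r 3) = some (Hos3E.Hh i r 3)) ∨
    (M (Res3E.U i r 2) = some (Hos3E.Hh i r 2) ∧
     M (Res3E.U i r 3) = some (Hos3E.Hh i r 1)) := by
  have h := hM.2.2.1 _ (mem_cU23 (i := i) (r := r) (B := B))
  simpa [instI33E] using h

lemma state4 (hM : (instI33E B).IsMatching M) (i : Fin n) (r : Fin 4) :
    M (Res3E.U i r 4) = none ∨ M (Res3E.U i r 4) = some (Hos3E.Y i r) ∨
    M (Res3E.U i r 4) = some (Hos3E.Hh i r 0) := by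
  rcases h : M (Res3E.U i r 4) with _ | hosp
  · exact Or.inl rfl
  · have := hM.2.1 _ (mem_sU4 (i := i) (r := r) (B := B)) _ h
    simp [instI33E] at this
    rcases this with rfl | rfl
    · exact Or.inr (Or.inl rfl)
    · exact Or.inr (Or.inr rfl)

end ProofAux4
section ProofAux5
variable {n m : ℕ} {B : E3SAT n m} {M : Res3E n m → Option (Hos3E n m)}

open Res3E Hos3E

lemma gadget (hM : (instI33E B).Stable M) (i : Fin n) (r : Fin 4) :
    ∃ a : Fin 4, M (Res3E.X i a) = some (Hos3E.Y i r) ∧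
      M (Res3E.K i a) = some (Hos3E.L i r) := by
  obtain ⟨hmat, hbs, hbc⟩ := hM
  have hinj := hmat.1
  have h01 := state01 hmat i r
  have h23 := state23 hmat i r
  have hpref0 : (instI33E B).hospPref (Hos3E.Hh i r 0)
      = [Res3E.U i r 4, Res3E.U i r 0, Res3E.U i r 2] := by simp [instI33E]
  have hpref1 : (instI33E B).hospPref (Hos3E.Hh i r 1)
      = [Res3E.U i r 3, Res3E.U i r 1] := by simp [instI33E]
  -- Step 1: u⁵ is matched, to Y or Hh⁰
  have h4 : M (Res3E.U i r 4) = some (Hos3E.Y i r) ∨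
      M (Res3E.U i r 4) = some (Hos3E.Hh i r 0) := by
    rcases state4 hmat i r with h4n | h | h
    · exfalso
      apply hbs (Res3E.U i r 4) (Hos3E.Hh i r 0)
      refine ⟨mem_sU4, by simp [instI33E], Or.inl h4n, ?_⟩
      by_cases hfree : HRC1.HospFree M (Hos3E.Hh i r 0)
      · exact Or.inl hfree
      · right
        simp only [HRC1.HospFree, not_forall, not_not] at hfree
        obtain ⟨r', hr'⟩ := hfree
        obtain ⟨t, rfl⟩ := inv_Hh hmat hr'
        refine ⟨_, hr', ?_⟩
        rw [hpref0]
        fin_cases t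
        · exact prefers_one _ (by simp)
        · exfalso
          rcases h01 with ⟨-, h1⟩ | ⟨-, h1⟩ <;> simp_all
        · exact prefers_two _ (by simp) (by simp)
        · exfalso
          rcases h23 with ⟨-, h3⟩ | ⟨-, h3⟩ | ⟨-, h3⟩ <;> simp_all
        · exact absurd hr' (by simp_all)
    · exact Or.inl h
    · exact Or.inr h
  -- Step 2: u⁵ is matched to Hh⁰
  have h4' : M (Res3E.U i r 4) = some (Hos3E.Hh i r 0) := by
    rcases h4 with hy | h
    · exfalso
      rcases h23 with ⟨h2n, h3n⟩ | ⟨h2, h3⟩ | ⟨h2, h3⟩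
      · rcases h01 with ⟨h0n, h1n⟩ | ⟨h0, h1⟩
        · -- everything in gadget unmatched except u⁴ at Y: (u⁰,u¹) blocks with (Hh⁰,Hh¹)
          apply hbc (Res3E.U i r 0, Res3E.U i r 1) (Hos3E.Hh i r 0, Hos3E.Hh i r 1)
          refine ⟨mem_cU01, by simp [instI33E], Or.inl ⟨h0n, h1n⟩, ?_, ?_⟩
          · refine Or.inr (Or.inl ?_)
            intro res hres
            obtain ⟨t, rfl⟩ := inv_Hh hmat hres
            fin_cases t <;> simp_all
          · refine Or.inr (Or.inl ?_)
            intro res hres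
            obtain ⟨t, rfl⟩ := inv_Hh hmat hres
            fin_cases t <;> simp_all
        · -- (u⁰,u¹) at (Hh⁰,Hh¹): (u²,u³) blocks with (Hh²,Hh¹)
          apply hbc (Res3E.U i r 2, Res3E.U i r 3) (Hos3E.Hh i r 2, Hos3E.Hh i r 1)
          refine ⟨mem_cU23, by simp [instI33E], Or.inl ⟨h2n, h3n⟩, ?_, ?_⟩
          · refine Or.inr (Or.inl ?_)
            intro res hres
            obtain ⟨t, rfl⟩ := inv_Hh hmat hres
            fin_cases t <;> simp_all
          · refine Or.inr (Or.inr ⟨Res3E.U i r 1, h1, ?_⟩)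
            rw [hpref1]
            exact prefers_one _ (by simp)
      · -- (u²,u³) at (Hh⁰,Hh³)
        rcases h01 with ⟨h0n, h1n⟩ | ⟨h0, h1⟩
        · -- (u⁰,u¹) blocks with (Hh⁰,Hh¹)
          apply hbc (Res3E.U i r 0, Res3E.U i r 1) (Hos3E.Hh i r 0, Hos3E.Hh i r 1)
          refine ⟨mem_cU01, by simp [instI33E], Or.inl ⟨h0n, h1n⟩, ?_, ?_⟩
          · refine Or.inr (Or.inr ⟨Res3E.U i r 2, h2, ?_⟩)
            rw [hpref0]
            exact prefers_mid _ (by simp) (by simp) (by simp)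
          · refine Or.inr (Or.inl ?_)
            intro res hres
            obtain ⟨t, rfl⟩ := inv_Hh hmat hres
            fin_cases t <;> simp_all
        · -- u⁰ and u² both at Hh⁰: impossible
          have := hinj _ _ _ h0 h2
          simp at this
      · -- (u²,u³) at (Hh²,Hh¹)
        rcases h01 with ⟨h0n, h1n⟩ | ⟨h0, h1⟩
        · -- (u²,u³) blocks with (Hh⁰,Hh³)
          apply hbc (Res3E.U i r 2, Res3E.U i r 3) (Hos3E.Hh i r 0, Hos3E.Hh i r 3)
          refine ⟨mem_cU23, by simp [instI33E], ?_, ?_, ?_⟩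
          · refine Or.inr ⟨(Hos3E.Hh i r 2, Hos3E.Hh i r 1), by simp [instI33E],
              h2, h3, ?_⟩
            have : (instI33E B).couplePref (Res3E.U i r 2, Res3E.U i r 3)
                = [(Hos3E.Hh i r 0, Hos3E.Hh i r 3),
                   (Hos3E.Hh i r 2, Hos3E.Hh i r 1)] := by simp [instI33E]
            rw [this]
            exact prefers_one _ (by simp)
          · refine Or.inr (Or.inl ?_)
            intro res hres
            obtain ⟨t, rfl⟩ := inv_Hh hmat hres
            fin_cases t <;> simp_all
          · refine Or.inr (Or.inl ?_)
            intro res hres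
            obtain ⟨t, rfl⟩ := inv_Hh hmat hres
            fin_cases t <;> simp_all
        · -- u¹ and u³ both at Hh¹: impossible
          have := hinj _ _ _ h1 h3
          simp at this
    · exact h
  -- Step 3: Y is matched, necessarily to some xᵃ
  have hy : ∃ res, M res = some (Hos3E.Y i r) := by
    by_contra hfree
    push_neg at hfree
    apply hbs (Res3E.U i r 4) (Hos3E.Y i r)
    refine ⟨mem_sU4, by simp [instI33E], ?_, Or.inl hfree⟩
    refine Or.inr ⟨_, h4', ?_⟩
    have : (instI33E B).singlePref (Res3E.U i r 4)
        = [Hos3E.Y i r, Hos3E.Hh i r 0] := by simp [instI33E]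
    rw [this]
    exact prefers_one _ (by simp)
  obtain ⟨res, hres⟩ := hy
  rcases inv_Y hmat hres with rfl | ⟨a, rfl, hK⟩
  · rw [h4'] at hres; simp at hres
  · exact ⟨a, hres, hK⟩

end ProofAux5

/-- In any stable matching `M` of the extended instance `I′₃₃(B)`, every hospital in
`L ∪ Y` is matched and every resident in `K ∪ X` is matched. -/
theorem LY_and_KX_matched {n m : ℕ} (B : E3SAT n m)
    (M : Res3E n m → Option (Hos3E n m)) (hM : (instI33E B).Stable M) :
    (∀ (i : Fin n) (r : Fin 4), ∃ res, M res = some (Hos3E.L i r)) ∧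
    (∀ (i : Fin n) (r : Fin 4), ∃ res, M res = some (Hos3E.Y i r)) ∧
    (∀ (i : Fin n) (r : Fin 4), (M (Res3E.K i r)).isSome) ∧
    (∀ (i : Fin n) (r : Fin 4), (M (Res3E.X i r)).isSome) := by
  choose f hf1 hf2 using fun i r => gadget hM i r
  have hsurj : ∀ i, Function.Surjective (f i) := by
    intro i
    apply Finite.surjective_of_injective
    intro r1 r2 h
    have h2 := hf1 i r2
    rw [← h] at h2
    have h3 := Option.some.inj ((hf1 i r1).symm.trans h2)
    simpa using h3
  refine ⟨fun i r => ⟨_, hf2 i r⟩, fun i r => ⟨_, hf1 i r⟩, ?_, ?_⟩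
  · intro i a
    obtain ⟨r, hr⟩ := hsurj i a
    rw [← hr, hf2 i r]
    rfl
  · intro i a
    obtain ⟨r, hr⟩ := hsurj i a
    rw [← hr, hf1 i r]
    rfl
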